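/- Let r ≥ 1 be an integer, let ω : Fin r → ℝ, and let x ∈ ℂ with x + Σ_{i∈S} ω(i) ≠ 0 for every subset S ⊆ Fin r. Then exp of the derivative at w = 0 of the function w ↦ Σ_{S ⊆ Fin r} (−1)^{|S|} (x + Σ_{i∈S} ω(i))^{−w} equals Π_{S ⊆ Fin r} (x + Σ_{i∈S} ω(i))^{(−1)^{|S|+1}}, where each factor is an integer power (zpow) of a nonzero complex number. -/

import Mathlib

open Complex

lemma hasDerivAt_cpow_neg_aux (a : ℂ) (ha : a ≠ 0) :
    HasDerivAt (fun w : ℂ => a ^ (-w)) (-Complex.log a) 0 := by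
  have h1 : HasDerivAt (fun w : ℂ => Complex.log a * (-w)) (Complex.log a * (-1)) 0 :=
    ((hasDerivAt_id (0 : ℂ)).neg).const_mul (Complex.log a)
  have h2 := h1.cexp
  simp only [neg_zero, mul_zero, Complex.exp_zero, one_mul] at h2
  have : (fun w : ℂ => Complex.exp (Complex.log a * (-w))) = fun w : ℂ => a ^ (-w) := by
    funext w
    rw [Complex.cpow_def_of_ne_zero ha]
  rw [this] at h2
  simpa using h2

theorem multiperiod_gamma_negative_order (r : ℕ) (hr : 1 ≤ r) (ω : Fin r → ℝ) (x : ℂ)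
    (hx : ∀ S : Finset (Fin r), x + ∑ i ∈ S, (ω i : ℂ) ≠ 0) :
    Complex.exp (deriv
        (fun w : ℂ => ∑ S : Finset (Fin r),
          (-1 : ℂ) ^ S.card * (x + ∑ i ∈ S, (ω i : ℂ)) ^ (-w)) 0) =
    ∏ S : Finset (Fin r), (x + ∑ i ∈ S, (ω i : ℂ)) ^ ((-1 : ℤ) ^ (S.card + 1)) := by
  set a : Finset (Fin r) → ℂ := fun S => x + ∑ i ∈ S, (ω i : ℂ) with ha
  have key : HasDerivAt
      (fun w : ℂ => ∑ S : Finset (Fin r), (-1 : ℂ) ^ S.card * (a S) ^ (-w))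
      (∑ S : Finset (Fin r), (-1 : ℂ) ^ S.card * (-Complex.log (a S))) 0 := by
    apply HasDerivAt.fun_sum
    intro S _
    exact (hasDerivAt_cpow_neg_aux (a S) (hx S)).const_mul _
  rw [key.deriv, Complex.exp_sum]
  apply Finset.prod_congr rfl
  intro S _
  rcases Nat.even_or_odd S.card with he | ho
  · rw [he.neg_one_pow, one_mul]
    have : ((-1 : ℤ)) ^ (S.card + 1) = -1 := (he.add_one).neg_one_pow
    rw [this, zpow_neg_one, ← Complex.exp_log (hx S), ← Complex.exp_neg]
  · rw [ho.neg_one_pow, neg_mul, one_mul, neg_neg]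
    have : ((-1 : ℤ)) ^ (S.card + 1) = 1 := (Odd.add_one ho).neg_one_pow
    rw [this, zpow_one, Complex.exp_log (hx S)]
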